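/- Let X be a compact metric space with X = X_1 ∪ ... ∪ X_n, where each X_i is nonempty and is the attractor of a GIFS F_i of order m (i.e., X_i = ⋃_{f∈F_i} f(X_i^m) for finite families F_i of Lipschitz maps X_i^m → X_i). Suppose there exist Lipschitz maps π_i : X → X_i with π_i(x) = x for x ∈ X_i and max_i (Lip(π_i)·Lip(F_i)) < 1, where Lip(F_i) = max{Lip(f) : f ∈ F_i}. Then there is a finite family H of Lipschitz maps X^m → X with max{Lip(h) : h ∈ H} ≤ max_i (Lip(π_i)·Lip(F_i)) < 1 and X = ⋃_{h∈H} h(X^m); namely, for f ∈ F_i, take h(x_1,...,x_m) := f(π_i(x_1),...,π_i(x_m)). -/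
import Mathlib


/-- If a compact metric space `X` is the union of attractors
`X i` of GIFSs `f i` of order `m`, and there are Lipschitz retractions
`π i : X → X i` with `max_i (Lip(π i) · Lip(F i)) < 1`, then `X` is the
attractor of a GIFS of order `m` whose Lipschitz constant is at most
`max_i (Lip(π i) · Lip(F i))`. -/
theorem stmt_3 {X : Type*} [MetricSpace X] [CompactSpace X]
    (n m : ℕ) (Xs : Fin n → Set X)
    (hne : ∀ i, (Xs i).Nonempty)
    (hcov : ∀ x : X, ∃ i, x ∈ Xs i)
    (N : Fin n → ℕ)
    (f : (i : Fin n) → Fin (N i) → ((Fin m → (Xs i)) → (Xs i)))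
    (L : Fin n → NNReal)
    (hLip : ∀ i j, LipschitzWith (L i) (f i j))
    (hatt : ∀ i, (Set.univ : Set (Xs i)) = ⋃ j, Set.range (f i j))
    (π : (i : Fin n) → X → (Xs i))
    (hπ : ∀ (i : Fin n) (x : X) (hx : x ∈ Xs i), π i x = ⟨x, hx⟩)
    (P : Fin n → NNReal)
    (hπLip : ∀ i, LipschitzWith (P i) (π i))
    (hmax : Finset.univ.sup (fun i => P i * L i) < 1) :
    ∃ (N' : ℕ) (h : Fin N' → ((Fin m → X) → X)),
      (∀ j, LipschitzWith (Finset.univ.sup (fun i => P i * L i)) (h j)) ∧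
        (Set.univ : Set X) = ⋃ j, Set.range (h j) := by
  classical
  set K := Finset.univ.sup (fun i => P i * L i) with hK
  -- The sigma-indexed family
  set H : (Σ i : Fin n, Fin (N i)) → (Fin m → X) → X :=
    fun p x => (f p.1 p.2 (fun k => π p.1 (x k)) : X) with hH
  have hHLip : ∀ p, LipschitzWith K (H p) := by
    rintro ⟨i, j⟩
    have hg : LipschitzWith (P i) (fun (x : Fin m → X) (k : Fin m) => π i (x k)) := by
      intro x y
      refine edist_pi_le_iff.2 fun k => ?_
      calc edist (π i (x k)) (π i (y k)) ≤ P i * edist (x k) (y k) := hπLip i _ _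
        _ ≤ P i * edist x y := by gcongr; exact edist_le_pi_edist x y k
    have h1 : LipschitzWith (L i * P i) (fun x : Fin m → X => f i j (fun k => π i (x k))) :=
      (hLip i j).comp hg
    have h2 : LipschitzWith (1 * (L i * P i)) (H ⟨i, j⟩) :=
      LipschitzWith.comp (LipschitzWith.subtype_val _) h1
    refine h2.weaken ?_
    rw [one_mul, mul_comm]
    exact Finset.le_sup (f := fun i => P i * L i) (Finset.mem_univ i)
  have hHcov : ∀ x : X, ∃ p y, H p y = x := by
    intro x
    obtain ⟨i, hx⟩ := hcov x
    have : (⟨x, hx⟩ : Xs i) ∈ (Set.univ : Set (Xs i)) := Set.mem_univ _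
    rw [hatt i] at this
    obtain ⟨j, y, hy⟩ := Set.mem_iUnion.mp this
    refine ⟨⟨i, j⟩, fun k => (y k : X), ?_⟩
    have hyy : (fun k => π i ((y k : X))) = y := by
      funext k
      exact hπ i (y k) (y k).2
    simp only [hH, hyy, hy]
  -- Transfer to a Fin-indexed family
  refine ⟨Fintype.card (Σ i : Fin n, Fin (N i)),
    fun j => H ((Fintype.equivFin _).symm j), fun j => hHLip _, ?_⟩
  ext x
  simp only [Set.mem_univ, true_iff, Set.mem_iUnion, Set.mem_range]
  obtain ⟨p, y, hy⟩ := hHcov x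
  exact ⟨Fintype.equivFin _ p, y, by simpa using hy⟩
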